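/- For every fixed λ > 0, η ∈ ℝ and h ∈ ℝ: lim_{ε→0+} ε⁻²·D̃₁(λ,η,εh) = D̄₁(λ,η,h), lim_{ε→0+} ε⁻²·D̃₂(λ,η,εh) = D̄₂(λ,η,h), lim_{ε→0+} ε⁻²·D̃₊(λ,η,εh) = D̄₊(λ,η,h), lim_{ε→0+} ε⁻²·D̃₋(λ,η,εh) = D̄₋(λ,η,h), and consequently lim_{ε→0+} ε⁻⁸·δ̃_ε(λ,η,εh) = det D̄(λ,η,h). -/

import Mathlib

noncomputable section

open Real Matrix Complex

/-- Dispersion relation `ω(k) = 2√α·sin²(πk)`. -/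
def ω (α k : ℝ) : ℝ := 2 * Real.sqrt α * Real.sin (π * k) ^ 2

/-- `R(k) = 2·sin²(πk)·(1 + 2cos²(πk))`. -/
def R (k : ℝ) : ℝ := 2 * Real.sin (π * k) ^ 2 * (1 + 2 * Real.cos (π * k) ^ 2)

/-- `R′(k) = 2π·(sin(2πk) + sin(4πk))`. -/
def R' (k : ℝ) : ℝ := 2 * π * (Real.sin (2 * π * k) + Real.sin (4 * π * k))

/-- `R″(k) = 4π²·(4cos²(2πk) + cos(2πk) − 2)`. -/
def R'' (k : ℝ) : ℝ := 4 * π ^ 2 * (4 * Real.cos (2 * π * k) ^ 2 + Real.cos (2 * π * k) - 2)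

/-- `R_ε = R(k) + ((εη)²/8)·R″(k)`. -/
def Rε (ε η k : ℝ) : ℝ := R k + (ε * η) ^ 2 / 8 * R'' k

/-- `ω̄ = (ω(k + εη/2) + ω(k − εη/2))/2`. -/
def ωbar (α ε η k : ℝ) : ℝ := (ω α (k + ε * η / 2) + ω α (k - ε * η / 2)) / 2

/-- `Δω = ω(k + εη/2) − ω(k − εη/2)`. -/
def Δω (α ε η k : ℝ) : ℝ := ω α (k + ε * η / 2) - ω α (k - ε * η / 2)

/-- `D̃₁ = ε²λ + 2γR_ε + i·Δω`. -/
def D₁ (α γ ε lam η k : ℝ) : ℂ :=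
  (ε ^ 2 * lam + 2 * γ * Rε ε η k : ℝ) + Complex.I * (Δω α ε η k : ℝ)

/-- `D̃₂ = ε²λ + 2γR_ε + 2i·ω̄`. -/
def D₂ (α γ ε lam η k : ℝ) : ℂ :=
  (ε ^ 2 * lam + 2 * γ * Rε ε η k : ℝ) + 2 * Complex.I * (ωbar α ε η k : ℝ)

/-- `D̃₊ = −γR_ε + (γε/2)·R′(k)·η`. -/
def Dplus (γ ε η k : ℝ) : ℝ := -γ * Rε ε η k + γ * ε / 2 * R' k * η

/-- `D̃₋ = −γR_ε − (γε/2)·R′(k)·η`. -/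
def Dminus (γ ε η k : ℝ) : ℝ := -γ * Rε ε η k - γ * ε / 2 * R' k * η

/-- The 4×4 matrix `D̃_ε(λ,η,k)`. -/
def Dmat (α γ ε lam η k : ℝ) : Matrix (Fin 4) (Fin 4) ℂ :=
  !![D₁ α γ ε lam η k, (Dplus γ ε η k : ℂ), (Dminus γ ε η k : ℂ), 0;
     (Dplus γ ε η k : ℂ), D₂ α γ ε lam η k, 0, (Dminus γ ε η k : ℂ);
     (Dminus γ ε η k : ℂ), 0, (starRingEnd ℂ) (D₂ α γ ε lam η k), (Dplus γ ε η k : ℂ);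
     0, (Dminus γ ε η k : ℂ), (Dplus γ ε η k : ℂ), (starRingEnd ℂ) (D₁ α γ ε lam η k)]

/-- `δ̃_ε(λ,η,k) = det D̃_ε(λ,η,k)`. -/
def δdet (α γ ε lam η k : ℝ) : ℂ := (Dmat α γ ε lam η k).det

/-- Limiting symbol `D̄₁(λ,η,h) = λ + 12γπ²(h² + η²/4) + 4√α·π²·i·h·η`. -/
def Dbar₁ (α γ lam η h : ℝ) : ℂ :=
  ((lam + 12 * γ * π ^ 2 * (h ^ 2 + η ^ 2 / 4) : ℝ) : ℂ)
    + ((4 * Real.sqrt α * π ^ 2 * h * η : ℝ) : ℂ) * Complex.I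

/-- Limiting symbol `D̄₂(λ,η,h) = λ + 2π²(h² + η²/4)·(6γ + 2√α·i)`. -/
def Dbar₂ (α γ lam η h : ℝ) : ℂ :=
  (lam : ℂ) + ((2 * π ^ 2 * (h ^ 2 + η ^ 2 / 4) : ℝ) : ℂ) *
    (((6 * γ : ℝ) : ℂ) + ((2 * Real.sqrt α : ℝ) : ℂ) * Complex.I)

/-- Limiting symbol `D̄₊(λ,η,h) = −6γπ²(h − η/2)²`. -/
def DbarPlus (γ η h : ℝ) : ℝ := -6 * γ * π ^ 2 * (h - η / 2) ^ 2

/-- Limiting symbol `D̄₋(λ,η,h) = −6γπ²(h + η/2)²`. -/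
def DbarMinus (γ η h : ℝ) : ℝ := -6 * γ * π ^ 2 * (h + η / 2) ^ 2

/-- The limiting 4×4 matrix `D̄(λ,η,h)`. -/
def DbarMat (α γ lam η h : ℝ) : Matrix (Fin 4) (Fin 4) ℂ :=
  !![Dbar₁ α γ lam η h, (DbarPlus γ η h : ℂ), (DbarMinus γ η h : ℂ), 0;
     (DbarPlus γ η h : ℂ), Dbar₂ α γ lam η h, 0, (DbarMinus γ η h : ℂ);
     (DbarMinus γ η h : ℂ), 0, (starRingEnd ℂ) (Dbar₂ α γ lam η h), (DbarPlus γ η h : ℂ);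
     0, (DbarMinus γ η h : ℂ), (DbarPlus γ η h : ℂ), (starRingEnd ℂ) (Dbar₁ α γ lam η h)]


open Filter Topology

lemma hasDerivAt_sin_lin (a : ℝ) : HasDerivAt (fun ε : ℝ => Real.sin (a * ε)) a 0 := by
  have := (Real.hasDerivAt_sin (a * 0)).comp 0 ((hasDerivAt_id (0:ℝ)).const_mul a)
  simpa [Function.comp_def] using this

lemma tendsto_div_slope {f : ℝ → ℝ} {d : ℝ} (hf : HasDerivAt f d 0) (h0 : f 0 = 0) :
    Tendsto (fun ε => f ε / ε) (𝓝[>] (0:ℝ)) (𝓝 d) := by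
  have h := hasDerivAt_iff_tendsto_slope.mp hf
  have h2 : 𝓝[>] (0:ℝ) ≤ 𝓝[≠] (0:ℝ) := nhdsWithin_mono _ (fun x hx => ne_of_gt hx)
  refine (h.mono_left h2).congr (fun x => ?_)
  simp [slope_def_field, h0]

lemma tendsto_sin_sq_div (c : ℝ) :
    Tendsto (fun ε : ℝ => Real.sin (c * ε) ^ 2 / ε ^ 2) (𝓝[>] (0:ℝ)) (𝓝 (c ^ 2)) := by
  have h1 := tendsto_div_slope (hasDerivAt_sin_lin c) (by simp)
  have h2 := h1.mul h1
  rw [show c ^ 2 = c * c by ring]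
  exact h2.congr fun ε => by ring

set_option maxHeartbeats 1000000 in
theorem symbols_scaling_limit (α γ : ℝ) (hα : 0 < α) (hγ : 0 < γ)
    (lam η h : ℝ) (hlam : 0 < lam) :
    Filter.Tendsto (fun ε : ℝ => (1 / (ε : ℂ) ^ 2) * D₁ α γ ε lam η (ε * h))
      (nhdsWithin 0 (Set.Ioi 0)) (nhds (Dbar₁ α γ lam η h)) ∧
    Filter.Tendsto (fun ε : ℝ => (1 / (ε : ℂ) ^ 2) * D₂ α γ ε lam η (ε * h))
      (nhdsWithin 0 (Set.Ioi 0)) (nhds (Dbar₂ α γ lam η h)) ∧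
    Filter.Tendsto (fun ε : ℝ => Dplus γ ε η (ε * h) / ε ^ 2)
      (nhdsWithin 0 (Set.Ioi 0)) (nhds (DbarPlus γ η h)) ∧
    Filter.Tendsto (fun ε : ℝ => Dminus γ ε η (ε * h) / ε ^ 2)
      (nhdsWithin 0 (Set.Ioi 0)) (nhds (DbarMinus γ η h)) ∧
    Filter.Tendsto (fun ε : ℝ => (1 / (ε : ℂ) ^ 8) * δdet α γ ε lam η (ε * h))
      (nhdsWithin 0 (Set.Ioi 0)) (nhds ((DbarMat α γ lam η h).det)) := by
  
  have hcos3 : Tendsto (fun ε : ℝ => 2*(1 + 2*Real.cos (π*h*ε)^2)) (𝓝[>] (0:ℝ)) (𝓝 6) := by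
    have hc : Continuous fun ε : ℝ => 2*(1 + 2*Real.cos (π*h*ε)^2) := by fun_prop
    have h2 := (hc.tendsto 0).mono_left (nhdsWithin_le_nhds (s := Set.Ioi (0:ℝ)))
    norm_num at h2
    exact h2
  have hR'' : Tendsto (fun ε : ℝ => R'' (ε*h)) (𝓝[>] (0:ℝ)) (𝓝 (12*π^2)) := by
    have hc : Continuous fun ε : ℝ => R'' (ε*h) := by unfold R''; fun_prop
    have h2 := (hc.tendsto 0).mono_left (nhdsWithin_le_nhds (s := Set.Ioi (0:ℝ)))
    rw [show R'' (0*h) = 12*π^2 by unfold R''; norm_num; ring] at h2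
    exact h2
  have hRε : Tendsto (fun ε : ℝ => Rε ε η (ε*h)/ε^2) (𝓝[>] (0:ℝ))
      (𝓝 (6*π^2*(h^2+η^2/4))) := by
    have key := ((tendsto_sin_sq_div (π*h)).mul hcos3).add (hR''.const_mul (η^2/8))
    rw [show (6:ℝ)*π^2*(h^2+η^2/4) = (π*h)^2*6 + η^2/8*(12*π^2) by ring]
    refine Tendsto.congr' ?_ key
    filter_upwards [self_mem_nhdsWithin] with ε hε
    have hε0 : (ε:ℝ) ≠ 0 := ne_of_gt hε
    unfold Rε R
    rw [show π*(ε*h) = π*h*ε by ring]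
    field_simp
  have hωp : Tendsto (fun ε : ℝ => ω α (ε*h + ε*η/2)/ε^2) (𝓝[>] (0:ℝ))
      (𝓝 (2*Real.sqrt α*(π*(h+η/2))^2)) := by
    have key := (tendsto_sin_sq_div (π*(h+η/2))).const_mul (2*Real.sqrt α)
    refine Tendsto.congr (fun ε => ?_) key
    unfold ω; rw [show π*(ε*h+ε*η/2) = π*(h+η/2)*ε by ring]; ring
  have hωm : Tendsto (fun ε : ℝ => ω α (ε*h - ε*η/2)/ε^2) (𝓝[>] (0:ℝ))
      (𝓝 (2*Real.sqrt α*(π*(h-η/2))^2)) := by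
    have key := (tendsto_sin_sq_div (π*(h-η/2))).const_mul (2*Real.sqrt α)
    refine Tendsto.congr (fun ε => ?_) key
    unfold ω; rw [show π*(ε*h-ε*η/2) = π*(h-η/2)*ε by ring]; ring
  have hR' : Tendsto (fun ε : ℝ => R' (ε*h)/ε) (𝓝[>] (0:ℝ)) (𝓝 (12*π^2*h)) := by
    have hd : HasDerivAt (fun ε : ℝ => R' (ε*h)) (12*π^2*h) 0 := by
      have h3 := ((hasDerivAt_sin_lin (2*π*h)).add (hasDerivAt_sin_lin (4*π*h))).const_mul (2*π)
      have heq : (fun ε : ℝ => R' (ε*h))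
          = fun ε : ℝ => 2*π*(Real.sin (2*π*h*ε) + Real.sin (4*π*h*ε)) := by
        funext ε; unfold R'
        rw [show 2*π*(ε*h) = 2*π*h*ε by ring, show 4*π*(ε*h) = 4*π*h*ε by ring]
      rw [heq]
      convert h3 using 1; rfl; rfl; rfl; ring
    exact tendsto_div_slope hd (by unfold R'; norm_num)
  have ha : Tendsto (fun ε : ℝ => (ε^2*lam + 2*γ*Rε ε η (ε*h))/ε^2) (𝓝[>] (0:ℝ))
      (𝓝 (lam + 2*γ*(6*π^2*(h^2+η^2/4)))) := by
    have key := (tendsto_const_nhds (x := lam) (f := 𝓝[>] (0:ℝ))).add (hRε.const_mul (2*γ))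
    refine Tendsto.congr' ?_ key
    filter_upwards [self_mem_nhdsWithin] with ε hε
    have hε0 : (ε:ℝ) ≠ 0 := ne_of_gt hε
    field_simp
  have hΔ : Tendsto (fun ε : ℝ => Δω α ε η (ε*h)/ε^2) (𝓝[>] (0:ℝ))
      (𝓝 (2*Real.sqrt α*(π*(h+η/2))^2 - 2*Real.sqrt α*(π*(h-η/2))^2)) := by
    refine Tendsto.congr (fun ε => ?_) (hωp.sub hωm)
    unfold Δω; ring
  have hωb : Tendsto (fun ε : ℝ => ωbar α ε η (ε*h)/ε^2) (𝓝[>] (0:ℝ))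
      (𝓝 ((2*Real.sqrt α*(π*(h+η/2))^2 + 2*Real.sqrt α*(π*(h-η/2))^2)/2)) := by
    refine Tendsto.congr (fun ε => ?_) ((hωp.add hωm).div_const 2)
    unfold ωbar; ring
  have T1 : Tendsto (fun ε : ℝ => (1 / (ε : ℂ) ^ 2) * D₁ α γ ε lam η (ε * h))
      (𝓝[>] (0:ℝ)) (𝓝 (Dbar₁ α γ lam η h)) := by
    have key := ((Complex.continuous_ofReal.tendsto _).comp ha).add
      (((Complex.continuous_ofReal.tendsto _).comp hΔ).const_mul Complex.I)
    rw [show Dbar₁ α γ lam η h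
        = (((lam + 2*γ*(6*π^2*(h^2+η^2/4)) : ℝ) : ℂ)
          + Complex.I * ((2*Real.sqrt α*(π*(h+η/2))^2 - 2*Real.sqrt α*(π*(h-η/2))^2 : ℝ) : ℂ))
        from by unfold Dbar₁; push_cast; ring]
    refine Tendsto.congr' ?_ key
    filter_upwards [self_mem_nhdsWithin] with ε hε
    have hε0 : (ε:ℂ) ≠ 0 := by exact_mod_cast ne_of_gt hε
    unfold D₁
    simp only [Function.comp]
    push_cast
    field_simp
    all_goals ring
  have T2 : Tendsto (fun ε : ℝ => (1 / (ε : ℂ) ^ 2) * D₂ α γ ε lam η (ε * h))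
      (𝓝[>] (0:ℝ)) (𝓝 (Dbar₂ α γ lam η h)) := by
    have key := ((Complex.continuous_ofReal.tendsto _).comp ha).add
      ((((Complex.continuous_ofReal.tendsto _).comp hωb).const_mul Complex.I).const_mul 2)
    rw [show Dbar₂ α γ lam η h
        = (((lam + 2*γ*(6*π^2*(h^2+η^2/4)) : ℝ) : ℂ)
          + 2 * (Complex.I * ((2*Real.sqrt α*(π*(h+η/2))^2 + 2*Real.sqrt α*(π*(h-η/2))^2)/2 : ℝ)))
        from by unfold Dbar₂; push_cast; ring]
    refine Tendsto.congr' ?_ key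
    filter_upwards [self_mem_nhdsWithin] with ε hε
    have hε0 : (ε:ℂ) ≠ 0 := by exact_mod_cast ne_of_gt hε
    unfold D₂
    simp only [Function.comp]
    push_cast
    field_simp
    all_goals ring
  have T3 : Tendsto (fun ε : ℝ => Dplus γ ε η (ε * h) / ε ^ 2) (𝓝[>] (0:ℝ))
      (𝓝 (DbarPlus γ η h)) := by
    have key := (hRε.const_mul (-γ)).add ((hR'.const_mul (γ/2)).mul_const η)
    rw [show DbarPlus γ η h = -γ*(6*π^2*(h^2+η^2/4)) + γ/2*(12*π^2*h)*η
        from by unfold DbarPlus; ring]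
    refine Tendsto.congr' ?_ key
    filter_upwards [self_mem_nhdsWithin] with ε hε
    have hε0 : (ε:ℝ) ≠ 0 := ne_of_gt hε
    unfold Dplus
    field_simp
  have T4 : Tendsto (fun ε : ℝ => Dminus γ ε η (ε * h) / ε ^ 2) (𝓝[>] (0:ℝ))
      (𝓝 (DbarMinus γ η h)) := by
    have key := (hRε.const_mul (-γ)).sub ((hR'.const_mul (γ/2)).mul_const η)
    rw [show DbarMinus γ η h = -γ*(6*π^2*(h^2+η^2/4)) - γ/2*(12*π^2*h)*η
        from by unfold DbarMinus; ring]
    refine Tendsto.congr' ?_ key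
    filter_upwards [self_mem_nhdsWithin] with ε hε
    have hε0 : (ε:ℝ) ≠ 0 := ne_of_gt hε
    unfold Dminus
    field_simp
  have T1c : Tendsto (fun ε : ℝ => (1 / (ε : ℂ) ^ 2) * (starRingEnd ℂ) (D₁ α γ ε lam η (ε * h)))
      (𝓝[>] (0:ℝ)) (𝓝 ((starRingEnd ℂ) (Dbar₁ α γ lam η h))) := by
    have key := ((Complex.continuous_conj.tendsto _).comp T1)
    refine Tendsto.congr (fun ε => ?_) key
    simp only [Function.comp, _root_.map_mul, map_div₀, _root_.map_one, map_pow, Complex.conj_ofReal]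
  have T2c : Tendsto (fun ε : ℝ => (1 / (ε : ℂ) ^ 2) * (starRingEnd ℂ) (D₂ α γ ε lam η (ε * h)))
      (𝓝[>] (0:ℝ)) (𝓝 ((starRingEnd ℂ) (Dbar₂ α γ lam η h))) := by
    have key := ((Complex.continuous_conj.tendsto _).comp T2)
    refine Tendsto.congr (fun ε => ?_) key
    simp only [Function.comp, _root_.map_mul, map_div₀, _root_.map_one, map_pow, Complex.conj_ofReal]
  have T3c : Tendsto (fun ε : ℝ => (1 / (ε : ℂ) ^ 2) * ((Dplus γ ε η (ε * h) : ℝ) : ℂ))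
      (𝓝[>] (0:ℝ)) (𝓝 ((DbarPlus γ η h : ℝ) : ℂ)) := by
    have key := (Complex.continuous_ofReal.tendsto _).comp T3
    refine Tendsto.congr (fun ε => ?_) key
    simp only [Function.comp]
    push_cast
    ring
  have T4c : Tendsto (fun ε : ℝ => (1 / (ε : ℂ) ^ 2) * ((Dminus γ ε η (ε * h) : ℝ) : ℂ))
      (𝓝[>] (0:ℝ)) (𝓝 ((DbarMinus γ η h : ℝ) : ℂ)) := by
    have key := (Complex.continuous_ofReal.tendsto _).comp T4
    refine Tendsto.congr (fun ε => ?_) key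
    simp only [Function.comp]
    push_cast
    ring
  have hM : Tendsto (fun ε : ℝ => (1 / (ε : ℂ) ^ 2) • Dmat α γ ε lam η (ε * h))
      (𝓝[>] (0:ℝ)) (𝓝 (DbarMat α γ lam η h)) := by
    refine tendsto_pi_nhds.mpr fun i => tendsto_pi_nhds.mpr fun j => ?_
    fin_cases i <;> fin_cases j <;>
      simp only [Dmat, DbarMat, Matrix.smul_apply, smul_eq_mul, Fin.zero_eta, Fin.mk_one, Fin.reduceFinMk, Matrix.of_apply,
        Fin.isValue, Matrix.cons_val', Matrix.cons_val_zero, Matrix.cons_val_one,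
        Matrix.head_cons, Matrix.empty_val', Matrix.cons_val_fin_one, Matrix.head_fin_const,
        Matrix.cons_val_two, Matrix.cons_val_three, Matrix.tail_cons, mul_zero] <;>
      first
        | exact T1 | exact T2 | exact T1c | exact T2c
        | exact T3c | exact T4c | exact tendsto_const_nhds
  have T5 : Tendsto (fun ε : ℝ => (1 / (ε : ℂ) ^ 8) * δdet α γ ε lam η (ε * h))
      (𝓝[>] (0:ℝ)) (𝓝 ((DbarMat α γ lam η h).det)) := by
    have hdetc : Continuous fun M : Matrix (Fin 4) (Fin 4) ℂ => M.det := continuous_id.matrix_det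
    have key := (hdetc.tendsto _).comp hM
    refine Tendsto.congr (fun ε => ?_) key
    simp only [Function.comp, δdet, Matrix.det_smul, Fintype.card_fin]
    ring
  exact ⟨T1, T2, T3, T4, T5⟩
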